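/- Let 0 < α < 1, 0 < β < 1, τ > 0, σ_e > 0, t > 0, p > 0, and c be real. Let I ⊆ ℝ be an open interval and x : I → (0,1) a twice differentiable function satisfying, for every θ ∈ I, the identity τσ_e·x(θ)^{−α} − (τσ_e·t^{1−β}/(1−β))·(1−x(θ))^{−α} + c − (1−θ)p = 0. If for every θ ∈ I the condition −x(θ)^{−α−2} + (t^{1−β}/(1−β))·(1−x(θ))^{−α−2} > 0 holds, then x''(θ) < 0 for every θ ∈ I. -/

import Mathlib

/-- Under the stated positivity condition, the mobile user's best response to
the sponsorship factor `θ` has strictly negative second derivative. -/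
theorem best_response_second_deriv_theta_neg (α β τ σe t c p a b : ℝ) (x : ℝ → ℝ)
    (hα0 : 0 < α) (hα1 : α < 1) (hβ0 : 0 < β) (hβ1 : β < 1)
    (hτ : 0 < τ) (hσe : 0 < σe) (ht : 0 < t) (hp : 0 < p)
    (hmem : ∀ θ ∈ Set.Ioo a b, x θ ∈ Set.Ioo (0 : ℝ) 1)
    (hdiff : ∀ θ ∈ Set.Ioo a b, DifferentiableAt ℝ x θ)
    (hdiff2 : ∀ θ ∈ Set.Ioo a b, DifferentiableAt ℝ (deriv x) θ)
    (hFOC : ∀ θ ∈ Set.Ioo a b,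
      τ * σe * x θ ^ (-α) - τ * σe * t ^ (1 - β) / (1 - β) * (1 - x θ) ^ (-α)
        + c - (1 - θ) * p = 0)
    (hcond : ∀ θ ∈ Set.Ioo a b,
      0 < -(x θ ^ (-α - 2)) + t ^ (1 - β) / (1 - β) * (1 - x θ) ^ (-α - 2)) :
    ∀ θ ∈ Set.Ioo a b, deriv (deriv x) θ < 0 := by
  have hβ' : (0:ℝ) < 1 - β := by linarith
  have htpow : (0:ℝ) < t ^ (1 - β) := Real.rpow_pos_of_pos ht _
  set K : ℝ := τ * σe * t ^ (1 - β) / (1 - β) with hK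
  have hKpos : 0 < K := by
    rw [hK]; positivity
  set E : ℝ → ℝ := fun s => -(α * (τ * σe) * x s ^ (-α - 1)) - α * K * (1 - x s) ^ (-α - 1)
    with hE
  -- Step 1: first-order identity for the derivative of x on the interval
  have key1 : ∀ s ∈ Set.Ioo a b, E s * deriv x s + p = 0 := by
    intro s hs
    obtain ⟨hs0, hs1⟩ := hmem s hs
    have hsxne : x s ≠ 0 := ne_of_gt hs0
    have hs1x : (0:ℝ) < 1 - x s := by linarith
    have hs1xne : (1:ℝ) - x s ≠ 0 := ne_of_gt hs1x
    have hx : HasDerivAt x (deriv x s) s := (hdiff s hs).hasDerivAt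
    have h1 : HasDerivAt (fun u => x u ^ (-α)) ((-α * x s ^ (-α - 1)) * deriv x s) s := by
      have := (Real.hasDerivAt_rpow_const (p := -α) (Or.inl hsxne)).comp s hx
      simpa [Function.comp_def] using this
    have hin : HasDerivAt (fun u => 1 - x u) (-(deriv x s)) s := by
      exact hx.const_sub 1
    have h2 : HasDerivAt (fun u => (1 - x u) ^ (-α))
        ((-α * (1 - x s) ^ (-α - 1)) * -(deriv x s)) s := by
      have := (Real.hasDerivAt_rpow_const (p := -α) (Or.inl hs1xne)).comp s hin
      simpa [Function.comp_def] using this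
    have h3 : HasDerivAt (fun u => (1 - u) * p) ((-1) * p) s := by
      exact (((hasDerivAt_id s).const_sub 1).mul_const p)
    have hF : HasDerivAt
        (fun u => τ * σe * x u ^ (-α) - K * (1 - x u) ^ (-α) + c - (1 - u) * p)
        (τ * σe * ((-α * x s ^ (-α - 1)) * deriv x s)
          - K * ((-α * (1 - x s) ^ (-α - 1)) * -(deriv x s)) - (-1) * p) s := by
      exact (((h1.const_mul (τ * σe)).sub (h2.const_mul K)).add_const c).sub h3
    have hFz : HasDerivAt
        (fun u => τ * σe * x u ^ (-α) - K * (1 - x u) ^ (-α) + c - (1 - u) * p) 0 s := by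
      have hev : (fun u => τ * σe * x u ^ (-α) - K * (1 - x u) ^ (-α) + c - (1 - u) * p)
          =ᶠ[nhds s] fun _ => (0:ℝ) := by
        filter_upwards [Ioo_mem_nhds hs.1 hs.2] with u hu
        have := hFOC u hu
        rw [hK]
        linarith [this]
      exact (hasDerivAt_const s (0:ℝ)).congr_of_eventuallyEq hev
    have huniq := hF.unique hFz
    rw [hE]
    simp only []
    linear_combination huniq
  -- Step 2: differentiate the first-order identity at θ
  intro θ hθ
  obtain ⟨hx0, hx1⟩ := hmem θ hθ
  have hxne : x θ ≠ 0 := ne_of_gt hx0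
  have h1x : (0:ℝ) < 1 - x θ := by linarith
  have h1xne : (1:ℝ) - x θ ≠ 0 := ne_of_gt h1x
  have hx : HasDerivAt x (deriv x θ) θ := (hdiff θ hθ).hasDerivAt
  have hx' : HasDerivAt (deriv x) (deriv (deriv x) θ) θ := (hdiff2 θ hθ).hasDerivAt
  have hin : HasDerivAt (fun u => 1 - x u) (-(deriv x θ)) θ := by
    exact hx.const_sub 1
  have h1 : HasDerivAt (fun u => x u ^ (-α - 1))
      (((-α - 1) * x θ ^ (-α - 1 - 1)) * deriv x θ) θ := by
    have := (Real.hasDerivAt_rpow_const (p := -α - 1) (Or.inl hxne)).comp θ hx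
    simpa [Function.comp_def] using this
  have h2 : HasDerivAt (fun u => (1 - x u) ^ (-α - 1))
      (((-α - 1) * (1 - x θ) ^ (-α - 1 - 1)) * -(deriv x θ)) θ := by
    have := (Real.hasDerivAt_rpow_const (p := -α - 1) (Or.inl h1xne)).comp θ hin
    simpa [Function.comp_def] using this
  have hEd : HasDerivAt E
      (-(α * (τ * σe) * (((-α - 1) * x θ ^ (-α - 1 - 1)) * deriv x θ))
        - α * K * (((-α - 1) * (1 - x θ) ^ (-α - 1 - 1)) * -(deriv x θ))) θ := by
    rw [hE]
    exact ((h1.const_mul (α * (τ * σe))).neg).sub (h2.const_mul (α * K))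
  have hH : HasDerivAt (fun s => E s * deriv x s + p)
      ((-(α * (τ * σe) * (((-α - 1) * x θ ^ (-α - 1 - 1)) * deriv x θ))
        - α * K * (((-α - 1) * (1 - x θ) ^ (-α - 1 - 1)) * -(deriv x θ))) * deriv x θ
        + E θ * deriv (deriv x) θ) θ := (hEd.mul hx').add_const p
  have hHz : HasDerivAt (fun s => E s * deriv x s + p) 0 θ := by
    have hev : (fun s => E s * deriv x s + p) =ᶠ[nhds θ] fun _ => (0:ℝ) := by
      filter_upwards [Ioo_mem_nhds hθ.1 hθ.2] with u hu
      exact key1 u hu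
    exact (hasDerivAt_const θ (0:ℝ)).congr_of_eventuallyEq hev
  have huniq := hH.unique hHz
  rw [show (-α - 1 - 1 : ℝ) = -α - 2 by ring] at huniq
  -- abbreviations
  have hA : (0:ℝ) < x θ ^ (-α - 2) := Real.rpow_pos_of_pos hx0 _
  have hB : (0:ℝ) < (1 - x θ) ^ (-α - 2) := Real.rpow_pos_of_pos h1x _
  have hP : (0:ℝ) < x θ ^ (-α - 1) := Real.rpow_pos_of_pos hx0 _
  have hQ : (0:ℝ) < (1 - x θ) ^ (-α - 1) := Real.rpow_pos_of_pos h1x _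
  have hEneg : E θ < 0 := by
    rw [hE]
    simp only []
    nlinarith [mul_pos (mul_pos hα0 (mul_pos hτ hσe)) hP, mul_pos (mul_pos hα0 hKpos) hQ]
  have hdne : deriv x θ ≠ 0 := by
    intro h0
    have := key1 θ hθ
    rw [h0] at this
    nlinarith
  have hd2 : (0:ℝ) < deriv x θ * deriv x θ := mul_self_pos.mpr hdne
  have hC : τ * σe * x θ ^ (-α - 2) - K * (1 - x θ) ^ (-α - 2) < 0 := by
    have h := hcond θ hθ
    have h2 := mul_pos (mul_pos hτ hσe) h
    have h3 : τ * σe * x θ ^ (-α - 2) - K * (1 - x θ) ^ (-α - 2)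
        = -(τ * σe * (-(x θ ^ (-α - 2)) + t ^ (1 - β) / (1 - β) * (1 - x θ) ^ (-α - 2))) := by
      rw [hK]; ring
    rw [h3]; linarith
  have hkey : E θ * deriv (deriv x) θ
      = (α * (α + 1)) * (K * (1 - x θ) ^ (-α - 2) - τ * σe * x θ ^ (-α - 2))
        * (deriv x θ * deriv x θ) := by
    linear_combination huniq
  have hprod : 0 < E θ * deriv (deriv x) θ := by
    rw [hkey]
    have h1 : (0:ℝ) < α * (α + 1) := by nlinarith
    have h2 : (0:ℝ) < K * (1 - x θ) ^ (-α - 2) - τ * σe * x θ ^ (-α - 2) := by linarith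
    exact mul_pos (mul_pos h1 h2) hd2
  by_contra hc
  push_neg at hc
  nlinarith [mul_nonneg (neg_nonneg.mpr (le_of_lt hEneg)) hc]
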